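/- For every κ ∈ ℝ there exist constants A ≥ 0 and r > 0 with the following property. Let X be a complete geodesic metric space that has curvature ≥ κ, let x₁, x₂, x₃ ∈ X have pairwise distances ≤ r, let t > 0 satisfy d(x₁,x₂) ≤ 2t and d(x₁,x₃) ≤ 2t, let m₂ be a midpoint of x₁ and x₃, and let m₃ be a midpoint of x₁ and x₂. Then d(m₂, m₃) ≥ (1/2)·d(x₂,x₃)·(1 − A·t²). -/

import Mathlib

open Metric MeasureTheory Set

noncomputable section

/-- The comparison angle `∠̃_κ(q; x, y)`: the angle at the vertex corresponding to `q` of a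
geodesic triangle in the simply connected model surface of constant curvature `κ` whose side
lengths are `d(q,x)`, `d(q,y)`, `d(x,y)`, computed by the law of cosines in each model. -/
def cmpAngle (κ : ℝ) {X : Type*} [MetricSpace X] (q x y : X) : ℝ :=
  if κ = 0 then
    Real.arccos ((dist q x ^ 2 + dist q y ^ 2 - dist x y ^ 2) / (2 * dist q x * dist q y))
  else if 0 < κ then
    Real.arccos ((Real.cos (Real.sqrt κ * dist x y) -
        Real.cos (Real.sqrt κ * dist q x) * Real.cos (Real.sqrt κ * dist q y)) /
      (Real.sin (Real.sqrt κ * dist q x) * Real.sin (Real.sqrt κ * dist q y)))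
  else
    Real.arccos ((Real.cosh (Real.sqrt (-κ) * dist q x) * Real.cosh (Real.sqrt (-κ) * dist q y) -
        Real.cosh (Real.sqrt (-κ) * dist x y)) /
      (Real.sinh (Real.sqrt (-κ) * dist q x) * Real.sinh (Real.sqrt (-κ) * dist q y)))

/-- A constant-speed geodesic parametrized by `[0,1]`. -/
def IsGeodesicSeg {X : Type*} [MetricSpace X] (γ : ℝ → X) : Prop :=
  ∀ s ∈ Set.Icc (0:ℝ) 1, ∀ t ∈ Set.Icc (0:ℝ) 1,
    dist (γ s) (γ t) = |s - t| * dist (γ 0) (γ 1)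

/-- A metric space is geodesic if any two points are joined by a constant-speed geodesic. -/
def GeodesicSpace (X : Type*) [MetricSpace X] : Prop :=
  ∀ x y : X, ∃ γ : ℝ → X, IsGeodesicSeg γ ∧ γ 0 = x ∧ γ 1 = y

/-- `X` has curvature `≥ κ`: the quadruple comparison condition. -/
def CurvGE (κ : ℝ) (X : Type*) [MetricSpace X] : Prop :=
  ∀ q x y z : X, q ≠ x → q ≠ y → q ≠ z → x ≠ y → x ≠ z → y ≠ z →
    cmpAngle κ q x y + cmpAngle κ q y z + cmpAngle κ q z x ≤ 2 * Real.pi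

/-- An `n`-dimensional Alexandrov space of curvature `≥ κ`: a complete, proper, geodesic
metric space of Hausdorff dimension `n` that has curvature `≥ κ`. -/
def IsAlexandrov (n : ℕ) (κ : ℝ) (X : Type*) [MetricSpace X] : Prop :=
  CompleteSpace X ∧ ProperSpace X ∧ GeodesicSpace X ∧
    dimH (Set.univ : Set X) = n ∧ CurvGE κ X

/-- A map into a real vector space is affine if it is affine along every constant-speed
geodesic. -/
def AffineOn {X : Type*} [MetricSpace X] {V : Type*} [AddCommGroup V] [Module ℝ V]
    (F : X → V) : Prop :=
  ∀ γ : ℝ → X, IsGeodesicSeg γ → ∀ t ∈ Set.Icc (0:ℝ) 1,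
    F (γ t) = (1 - t) • F (γ 0) + t • F (γ 1)

/-- A real-valued function is Lipschitz. -/
def IsLip {X : Type*} [MetricSpace X] (f : X → ℝ) : Prop :=
  ∃ L : ℝ, 0 ≤ L ∧ ∀ x y, |f x - f y| ≤ L * dist x y

/-- The optimal Lipschitz constant of a real-valued function. -/
def lipConst {X : Type*} [MetricSpace X] (f : X → ℝ) : ℝ :=
  sInf {L : ℝ | 0 ≤ L ∧ ∀ x y, |f x - f y| ≤ L * dist x y}

/-- `m` is a midpoint of `a` and `b`. -/
def IsMidpointOf {X : Type*} [MetricSpace X] (m a b : X) : Prop :=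
  dist a m = dist a b / 2 ∧ dist b m = dist a b / 2

set_option maxHeartbeats 1000000
section AuxLemmas

private lemma arccos_pair {u v : ℝ} (hu1 : -1 ≤ u) (hu2 : u ≤ 1) (hv1 : -1 ≤ v) (hv2 : v ≤ 1)
    (h : Real.arccos u + Real.arccos v ≤ Real.pi) : 0 ≤ u + v := by
  have h1 : Real.arccos u ≤ Real.arccos (-v) := by rw [Real.arccos_neg]; linarith
  have h2 := Real.cos_le_cos_of_nonneg_of_le_pi (Real.arccos_nonneg u) (Real.arccos_le_pi (-v)) h1
  rw [Real.cos_arccos hu1 hu2, Real.cos_arccos (by linarith) (by linarith)] at h2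
  linarith

private lemma cosh_double (x : ℝ) : Real.cosh (2 * x) = 2 * Real.cosh x ^ 2 - 1 := by
  rw [Real.cosh_two_mul, Real.sinh_sq]; ring

/-- Hyperbolic midpoint–apex inequality from the quadruple condition. -/
private lemma hyp_step {X : Type} [MetricSpace X] {κ : ℝ} (hκ : κ < 0) (hcurv : CurvGE κ X)
    (x y o z : X) (hxo : dist x o = dist x y / 2) (hyo : dist y o = dist x y / 2) :
    Real.cosh (Real.sqrt (-κ) * dist x z) + Real.cosh (Real.sqrt (-κ) * dist y z) ≤
      2 * Real.cosh (Real.sqrt (-κ) * (dist x y / 2)) * Real.cosh (Real.sqrt (-κ) * dist o z) := by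
  set s : ℝ := Real.sqrt (-κ) with hs_def
  have hs : 0 < s := Real.sqrt_pos.mpr (by linarith)
  rcases eq_or_lt_of_le (dist_nonneg (x := x) (y := y)) with ha0 | ha
  · -- x = y, o = x
    have e0 : dist x y = 0 := ha0.symm
    have hxo0 : dist x o = 0 := by rw [hxo, e0]; norm_num
    have hyo0 : dist y o = 0 := by rw [hyo, e0]; norm_num
    have e1 : dist x z = dist o z := by
      have h := abs_dist_sub_le x o z
      have := abs_le.mp (h.trans (le_of_eq hxo0))
      linarith [this.1, this.2]
    have e2 : dist y z = dist o z := by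
      have h := abs_dist_sub_le y o z
      have := abs_le.mp (h.trans (le_of_eq hyo0))
      linarith [this.1, this.2]
    rw [e0, e1, e2]
    norm_num
    linarith
  · -- dist x y > 0
    have hox : dist o x = dist x y / 2 := by rw [dist_comm]; exact hxo
    have hoy : dist o y = dist x y / 2 := by rw [dist_comm]; exact hyo
    have hd : Real.cosh (s * dist x y) = 2 * Real.cosh (s * (dist x y / 2)) ^ 2 - 1 := by
      rw [show s * dist x y = 2 * (s * (dist x y / 2)) by ring]; exact cosh_double _
    by_cases hzo : z = o
    · have e1 : dist x z = dist x y / 2 := by rw [hzo]; exact hxo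
      have e2 : dist y z = dist x y / 2 := by rw [hzo]; exact hyo
      have e3 : dist o z = 0 := by rw [hzo, dist_self]
      rw [e1, e2, e3, mul_zero, Real.cosh_zero]
      linarith
    by_cases hzx : z = x
    · have e1 : dist x z = 0 := by rw [hzx, dist_self]
      have e2 : dist y z = dist x y := by rw [hzx, dist_comm]
      have e3 : dist o z = dist x y / 2 := by rw [hzx]; exact hox
      rw [e1, e2, e3, mul_zero, Real.cosh_zero]
      nlinarith [hd]
    by_cases hzy : z = y
    · have e1 : dist x z = dist x y := by rw [hzy]
      have e2 : dist y z = 0 := by rw [hzy, dist_self]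
      have e3 : dist o z = dist x y / 2 := by rw [hzy]; exact hoy
      rw [e1, e2, e3, mul_zero, Real.cosh_zero]
      nlinarith [hd]
    -- nondegenerate case
    have hxyne : x ≠ y := by rw [← dist_pos]; exact ha
    have hoxne : o ≠ x := by rw [← dist_pos, hox]; linarith
    have hoyne : o ≠ y := by rw [← dist_pos, hoy]; linarith
    have hozne : o ≠ z := fun h => hzo (h.symm)
    have hxzne : x ≠ z := fun h => hzx (h.symm)
    have hyzne : y ≠ z := fun h => hzy (h.symm)
    have hP : 0 < dist o z := dist_pos.mpr hozne
    have cmpeq : ∀ q p w : X, cmpAngle κ q p w =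
        Real.arccos ((Real.cosh (s * dist q p) * Real.cosh (s * dist q w) -
          Real.cosh (s * dist p w)) / (Real.sinh (s * dist q p) * Real.sinh (s * dist q w))) := by
      intro q p w
      rw [cmpAngle, if_neg (ne_of_lt hκ), if_neg (not_lt.mpr hκ.le), hs_def]
    have hq := hcurv o x z y hoxne hozne hoyne (fun h => hzx h.symm) hxyne hzy
    rw [cmpeq o x z, cmpeq o z y, cmpeq o y x] at hq
    rw [hox, hoy, dist_comm y x, dist_comm z y] at hq
    -- third angle is π
    have hsinh : 0 < Real.sinh (s * (dist x y / 2)) := Real.sinh_pos_iff.mpr (by positivity)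
    have hsinhP : 0 < Real.sinh (s * dist o z) := Real.sinh_pos_iff.mpr (by positivity)
    have hpi : (Real.cosh (s * (dist x y / 2)) * Real.cosh (s * (dist x y / 2)) -
          Real.cosh (s * dist x y)) /
          (Real.sinh (s * (dist x y / 2)) * Real.sinh (s * (dist x y / 2))) = -1 := by
      rw [div_eq_iff (by positivity)]
      have := Real.sinh_sq (s * (dist x y / 2))
      nlinarith [hd, this]
    rw [hpi, Real.arccos_neg_one] at hq
    -- abbreviations
    set A0 : ℝ := s * (dist x y / 2) with hA0
    set P0 : ℝ := s * dist o z with hP0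
    set B0 : ℝ := s * dist x z with hB0
    set C0 : ℝ := s * dist y z with hC0
    have htriB1 : B0 ≤ A0 + P0 := by
      have := dist_triangle x o z
      rw [hxo] at this
      rw [hA0, hP0, hB0, ← mul_add]
      exact mul_le_mul_of_nonneg_left this hs.le
    have htriB2 : |A0 - P0| ≤ B0 := by
      have h := abs_dist_sub_le x z o
      rw [hxo, dist_comm z o] at h
      rw [hA0, hP0, hB0, ← mul_sub, abs_mul, abs_of_nonneg hs.le]
      calc s * |dist x y / 2 - dist o z| ≤ s * dist x z :=
            mul_le_mul_of_nonneg_left h hs.le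
        _ = s * dist x z := rfl
    have htriC1 : C0 ≤ A0 + P0 := by
      have := dist_triangle y o z
      rw [hyo] at this
      rw [hA0, hP0, hC0, ← mul_add]
      exact mul_le_mul_of_nonneg_left this hs.le
    have htriC2 : |A0 - P0| ≤ C0 := by
      have h := abs_dist_sub_le y z o
      rw [hyo, dist_comm z o] at h
      rw [hA0, hP0, hC0, ← mul_sub, abs_mul, abs_of_nonneg hs.le]
      exact mul_le_mul_of_nonneg_left h hs.le
    have hDpos : 0 < Real.sinh A0 * Real.sinh P0 := mul_pos hsinh hsinhP
    -- bounds on the two cosine arguments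
    have hnum1le : Real.cosh A0 * Real.cosh P0 - Real.cosh B0 ≤ Real.sinh A0 * Real.sinh P0 := by
      have := Real.cosh_sub A0 P0
      have hc : Real.cosh (A0 - P0) ≤ Real.cosh B0 := by
        rw [Real.cosh_le_cosh]
        rw [abs_of_nonneg (by positivity : (0:ℝ) ≤ B0)]
        exact htriB2
      linarith
    have hnum1ge : -(Real.sinh A0 * Real.sinh P0) ≤
        Real.cosh A0 * Real.cosh P0 - Real.cosh B0 := by
      have := Real.cosh_add A0 P0
      have hc : Real.cosh B0 ≤ Real.cosh (A0 + P0) := by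
        rw [Real.cosh_le_cosh, abs_of_nonneg (by positivity : (0:ℝ) ≤ B0),
          abs_of_nonneg (by positivity : (0:ℝ) ≤ A0 + P0)]
        exact htriB1
      linarith
    have hnum2le : Real.cosh A0 * Real.cosh P0 - Real.cosh C0 ≤ Real.sinh A0 * Real.sinh P0 := by
      have := Real.cosh_sub A0 P0
      have hc : Real.cosh (A0 - P0) ≤ Real.cosh C0 := by
        rw [Real.cosh_le_cosh, abs_of_nonneg (by positivity : (0:ℝ) ≤ C0)]
        exact htriC2
      linarith
    have hnum2ge : -(Real.sinh A0 * Real.sinh P0) ≤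
        Real.cosh A0 * Real.cosh P0 - Real.cosh C0 := by
      have := Real.cosh_add A0 P0
      have hc : Real.cosh C0 ≤ Real.cosh (A0 + P0) := by
        rw [Real.cosh_le_cosh, abs_of_nonneg (by positivity : (0:ℝ) ≤ C0),
          abs_of_nonneg (by positivity : (0:ℝ) ≤ A0 + P0)]
        exact htriC1
      linarith
    -- massage hq into arccos u + arccos v ≤ π
    have hq' : Real.arccos ((Real.cosh A0 * Real.cosh P0 - Real.cosh B0) /
          (Real.sinh A0 * Real.sinh P0)) +
        Real.arccos ((Real.cosh P0 * Real.cosh A0 - Real.cosh C0) /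
          (Real.sinh P0 * Real.sinh A0)) ≤ Real.pi := by linarith
    rw [show Real.cosh P0 * Real.cosh A0 - Real.cosh C0
          = Real.cosh A0 * Real.cosh P0 - Real.cosh C0 by ring,
        show Real.sinh P0 * Real.sinh A0 = Real.sinh A0 * Real.sinh P0 by ring] at hq'
    have hsum := arccos_pair
      (by rw [le_div_iff₀ hDpos]; linarith)
      (by rw [div_le_one hDpos]; linarith)
      (by rw [le_div_iff₀ hDpos]; linarith)
      (by rw [div_le_one hDpos]; linarith) hq'
    rw [← add_div, le_div_iff₀ hDpos, zero_mul] at hsum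
    linarith

/-- Spherical midpoint–apex inequality from the quadruple condition. -/
private lemma sph_step {X : Type} [MetricSpace X] {κ : ℝ} (hκ : 0 < κ) (hcurv : CurvGE κ X)
    (x y o z : X) (hxo : dist x o = dist x y / 2) (hyo : dist y o = dist x y / 2)
    (hxy1 : Real.sqrt κ * dist x y ≤ 1) (hoz1 : Real.sqrt κ * dist o z ≤ 1) :
    2 * Real.cos (Real.sqrt κ * (dist x y / 2)) * Real.cos (Real.sqrt κ * dist o z) ≤
      Real.cos (Real.sqrt κ * dist x z) + Real.cos (Real.sqrt κ * dist y z) := by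
  set s : ℝ := Real.sqrt κ with hs_def
  have hs : 0 < s := Real.sqrt_pos.mpr hκ
  have hpi := Real.pi_gt_three
  have hd : Real.cos (s * dist x y) = 2 * Real.cos (s * (dist x y / 2)) ^ 2 - 1 := by
    rw [show s * dist x y = 2 * (s * (dist x y / 2)) by ring]; exact Real.cos_two_mul _
  rcases eq_or_lt_of_le (dist_nonneg (x := x) (y := y)) with ha0 | ha
  · have e0 : dist x y = 0 := ha0.symm
    have hxo0 : dist x o = 0 := by rw [hxo, e0]; norm_num
    have hyo0 : dist y o = 0 := by rw [hyo, e0]; norm_num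
    have e1 : dist x z = dist o z := by
      have h := abs_dist_sub_le x o z
      have := abs_le.mp (h.trans (le_of_eq hxo0))
      linarith [this.1, this.2]
    have e2 : dist y z = dist o z := by
      have h := abs_dist_sub_le y o z
      have := abs_le.mp (h.trans (le_of_eq hyo0))
      linarith [this.1, this.2]
    rw [e0, e1, e2]
    norm_num
    linarith
  · have hox : dist o x = dist x y / 2 := by rw [dist_comm]; exact hxo
    have hoy : dist o y = dist x y / 2 := by rw [dist_comm]; exact hyo
    by_cases hzo : z = o
    · have e1 : dist x z = dist x y / 2 := by rw [hzo]; exact hxo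
      have e2 : dist y z = dist x y / 2 := by rw [hzo]; exact hyo
      have e3 : dist o z = 0 := by rw [hzo, dist_self]
      rw [e1, e2, e3, mul_zero, Real.cos_zero]
      linarith
    by_cases hzx : z = x
    · have e1 : dist x z = 0 := by rw [hzx, dist_self]
      have e2 : dist y z = dist x y := by rw [hzx, dist_comm]
      have e3 : dist o z = dist x y / 2 := by rw [hzx]; exact hox
      rw [e1, e2, e3, mul_zero, Real.cos_zero]
      nlinarith [hd]
    by_cases hzy : z = y
    · have e1 : dist x z = dist x y := by rw [hzy]
      have e2 : dist y z = 0 := by rw [hzy, dist_self]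
      have e3 : dist o z = dist x y / 2 := by rw [hzy]; exact hoy
      rw [e1, e2, e3, mul_zero, Real.cos_zero]
      nlinarith [hd]
    -- nondegenerate case
    have hxyne : x ≠ y := by rw [← dist_pos]; exact ha
    have hoxne : o ≠ x := by rw [← dist_pos, hox]; linarith
    have hoyne : o ≠ y := by rw [← dist_pos, hoy]; linarith
    have hozne : o ≠ z := fun h => hzo (h.symm)
    have hP : 0 < dist o z := dist_pos.mpr fun h => hzo h.symm
    have cmpeq : ∀ q p w : X, cmpAngle κ q p w =
        Real.arccos ((Real.cos (s * dist p w) -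
          Real.cos (s * dist q p) * Real.cos (s * dist q w)) /
          (Real.sin (s * dist q p) * Real.sin (s * dist q w))) := by
      intro q p w
      rw [cmpAngle, if_neg (ne_of_gt hκ), if_pos hκ, hs_def]
    have hq := hcurv o x z y hoxne hozne hoyne (fun h => hzx h.symm) hxyne hzy
    rw [cmpeq o x z, cmpeq o z y, cmpeq o y x] at hq
    rw [hox, hoy, dist_comm y x, dist_comm z y] at hq
    set A0 : ℝ := s * (dist x y / 2) with hA0
    set P0 : ℝ := s * dist o z with hP0
    set B0 : ℝ := s * dist x z with hB0
    set C0 : ℝ := s * dist y z with hC0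
    have hA0pos : 0 < A0 := by positivity
    have hA0le : A0 ≤ 1 / 2 := by rw [hA0]; nlinarith
    have hP0pos : 0 < P0 := by positivity
    have hsinA : 0 < Real.sin A0 := Real.sin_pos_of_pos_of_lt_pi hA0pos (by linarith)
    have hsinP : 0 < Real.sin P0 := Real.sin_pos_of_pos_of_lt_pi hP0pos (by linarith)
    -- π angle
    have hpiangle : (Real.cos (s * dist x y) - Real.cos A0 * Real.cos A0) /
        (Real.sin A0 * Real.sin A0) = -1 := by
      rw [div_eq_iff (by positivity)]
      have := Real.sin_sq A0
      nlinarith [hd, this]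
    rw [hpiangle, Real.arccos_neg_one] at hq
    have htriB1 : B0 ≤ A0 + P0 := by
      have := dist_triangle x o z
      rw [hxo] at this
      rw [hA0, hP0, hB0, ← mul_add]
      exact mul_le_mul_of_nonneg_left this hs.le
    have htriB2 : |A0 - P0| ≤ B0 := by
      have h := abs_dist_sub_le x z o
      rw [hxo, dist_comm z o] at h
      rw [hA0, hP0, hB0, ← mul_sub, abs_mul, abs_of_nonneg hs.le]
      exact mul_le_mul_of_nonneg_left h hs.le
    have htriC1 : C0 ≤ A0 + P0 := by
      have := dist_triangle y o z
      rw [hyo] at this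
      rw [hA0, hP0, hC0, ← mul_add]
      exact mul_le_mul_of_nonneg_left this hs.le
    have htriC2 : |A0 - P0| ≤ C0 := by
      have h := abs_dist_sub_le y z o
      rw [hyo, dist_comm z o] at h
      rw [hA0, hP0, hC0, ← mul_sub, abs_mul, abs_of_nonneg hs.le]
      exact mul_le_mul_of_nonneg_left h hs.le
    have hDpos : 0 < Real.sin A0 * Real.sin P0 := mul_pos hsinA hsinP
    have hB0pos : (0:ℝ) ≤ B0 := by positivity
    have hC0pos : (0:ℝ) ≤ C0 := by positivity
    -- bounds on cosine arguments
    have hnum1le : Real.cos B0 - Real.cos A0 * Real.cos P0 ≤ Real.sin A0 * Real.sin P0 := by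
      have hsub := Real.cos_sub A0 P0
      have hc : Real.cos B0 ≤ Real.cos (A0 - P0) := by
        rw [← Real.cos_abs (A0 - P0)]
        exact Real.cos_le_cos_of_nonneg_of_le_pi (abs_nonneg _) (by linarith) htriB2
      linarith
    have hnum1ge : -(Real.sin A0 * Real.sin P0) ≤ Real.cos B0 - Real.cos A0 * Real.cos P0 := by
      have hadd := Real.cos_add A0 P0
      have hc : Real.cos (A0 + P0) ≤ Real.cos B0 :=
        Real.cos_le_cos_of_nonneg_of_le_pi hB0pos (by linarith) htriB1
      linarith
    have hnum2le : Real.cos C0 - Real.cos A0 * Real.cos P0 ≤ Real.sin A0 * Real.sin P0 := by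
      have hsub := Real.cos_sub A0 P0
      have hc : Real.cos C0 ≤ Real.cos (A0 - P0) := by
        rw [← Real.cos_abs (A0 - P0)]
        exact Real.cos_le_cos_of_nonneg_of_le_pi (abs_nonneg _) (by linarith) htriC2
      linarith
    have hnum2ge : -(Real.sin A0 * Real.sin P0) ≤ Real.cos C0 - Real.cos A0 * Real.cos P0 := by
      have hadd := Real.cos_add A0 P0
      have hc : Real.cos (A0 + P0) ≤ Real.cos C0 :=
        Real.cos_le_cos_of_nonneg_of_le_pi hC0pos (by linarith) htriC1
      linarith
    have hq' : Real.arccos ((Real.cos B0 - Real.cos A0 * Real.cos P0) /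
          (Real.sin A0 * Real.sin P0)) +
        Real.arccos ((Real.cos C0 - Real.cos P0 * Real.cos A0) /
          (Real.sin P0 * Real.sin A0)) ≤ Real.pi := by linarith
    rw [show Real.cos C0 - Real.cos P0 * Real.cos A0
          = Real.cos C0 - Real.cos A0 * Real.cos P0 by ring,
        show Real.sin P0 * Real.sin A0 = Real.sin A0 * Real.sin P0 by ring] at hq'
    have hsum := arccos_pair
      (by rw [le_div_iff₀ hDpos]; linarith)
      (by rw [div_le_one hDpos]; linarith)
      (by rw [le_div_iff₀ hDpos]; linarith)
      (by rw [div_le_one hDpos]; linarith) hq'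
    rw [← add_div, le_div_iff₀ hDpos, zero_mul] at hsum
    linarith

/-- Euclidean midpoint–apex inequality from the quadruple condition. -/
private lemma euc_step {X : Type} [MetricSpace X] (hcurv : CurvGE 0 X)
    (x y o z : X) (hxo : dist x o = dist x y / 2) (hyo : dist y o = dist x y / 2) :
    dist x z ^ 2 + dist y z ^ 2 ≤ dist x y ^ 2 / 2 + 2 * dist o z ^ 2 := by
  rcases eq_or_lt_of_le (dist_nonneg (x := x) (y := y)) with ha0 | ha
  · have e0 : dist x y = 0 := ha0.symm
    have hxo0 : dist x o = 0 := by rw [hxo, e0]; norm_num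
    have hyo0 : dist y o = 0 := by rw [hyo, e0]; norm_num
    have e1 : dist x z = dist o z := by
      have h := abs_dist_sub_le x o z
      have := abs_le.mp (h.trans (le_of_eq hxo0))
      linarith [this.1, this.2]
    have e2 : dist y z = dist o z := by
      have h := abs_dist_sub_le y o z
      have := abs_le.mp (h.trans (le_of_eq hyo0))
      linarith [this.1, this.2]
    rw [e0, e1, e2]
    norm_num
    nlinarith [sq_nonneg (dist o z)]
  · have hox : dist o x = dist x y / 2 := by rw [dist_comm]; exact hxo
    have hoy : dist o y = dist x y / 2 := by rw [dist_comm]; exact hyo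
    by_cases hzo : z = o
    · have e1 : dist x z = dist x y / 2 := by rw [hzo]; exact hxo
      have e2 : dist y z = dist x y / 2 := by rw [hzo]; exact hyo
      have e3 : dist o z = 0 := by rw [hzo, dist_self]
      rw [e1, e2, e3]
      nlinarith [sq_nonneg (dist x y)]
    by_cases hzx : z = x
    · have e1 : dist x z = 0 := by rw [hzx, dist_self]
      have e2 : dist y z = dist x y := by rw [hzx, dist_comm]
      have e3 : dist o z = dist x y / 2 := by rw [hzx]; exact hox
      rw [e1, e2, e3]
      nlinarith [sq_nonneg (dist x y)]
    by_cases hzy : z = y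
    · have e1 : dist x z = dist x y := by rw [hzy]
      have e2 : dist y z = 0 := by rw [hzy, dist_self]
      have e3 : dist o z = dist x y / 2 := by rw [hzy]; exact hoy
      rw [e1, e2, e3]
      nlinarith [sq_nonneg (dist x y)]
    have hxyne : x ≠ y := by rw [← dist_pos]; exact ha
    have hoxne : o ≠ x := by rw [← dist_pos, hox]; linarith
    have hoyne : o ≠ y := by rw [← dist_pos, hoy]; linarith
    have hP : 0 < dist o z := dist_pos.mpr fun h => hzo h.symm
    have cmpeq : ∀ q p w : X, cmpAngle 0 q p w =
        Real.arccos ((dist q p ^ 2 + dist q w ^ 2 - dist p w ^ 2) /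
          (2 * dist q p * dist q w)) := by
      intro q p w
      rw [cmpAngle, if_pos rfl]
    have hq := hcurv o x z y hoxne (fun h => hzo h.symm) hoyne (fun h => hzx h.symm) hxyne hzy
    rw [cmpeq o x z, cmpeq o z y, cmpeq o y x] at hq
    rw [hox, hoy, dist_comm y x, dist_comm z y] at hq
    set a2 : ℝ := dist x y / 2 with ha2
    set P0 : ℝ := dist o z with hP0
    set B0 : ℝ := dist x z with hB0
    set C0 : ℝ := dist y z with hC0
    have ha2pos : 0 < a2 := by rw [ha2]; linarith
    -- π angle
    have hpiangle : (a2 ^ 2 + a2 ^ 2 - dist x y ^ 2) / (2 * a2 * a2) = -1 := by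
      rw [div_eq_iff (by positivity), ha2]
      ring
    rw [hpiangle, Real.arccos_neg_one] at hq
    have htriB1 : B0 ≤ a2 + P0 := by
      have := dist_triangle x o z
      rw [hxo] at this
      exact this
    have htriB2 : |a2 - P0| ≤ B0 := by
      have h := abs_dist_sub_le x z o
      rw [hxo, dist_comm z o] at h
      exact h
    have htriC1 : C0 ≤ a2 + P0 := by
      have := dist_triangle y o z
      rw [hyo] at this
      exact this
    have htriC2 : |a2 - P0| ≤ C0 := by
      have h := abs_dist_sub_le y z o
      rw [hyo, dist_comm z o] at h
      exact h
    have hDpos : (0:ℝ) < 2 * a2 * P0 := by positivity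
    have hB0pos : (0:ℝ) ≤ B0 := dist_nonneg
    have hC0pos : (0:ℝ) ≤ C0 := dist_nonneg
    have habsB := abs_le.mp htriB2
    have habsC := abs_le.mp htriC2
    have hq' : Real.arccos ((a2 ^ 2 + P0 ^ 2 - B0 ^ 2) / (2 * a2 * P0)) +
        Real.arccos ((P0 ^ 2 + a2 ^ 2 - C0 ^ 2) / (2 * P0 * a2)) ≤ Real.pi := by linarith
    rw [show P0 ^ 2 + a2 ^ 2 - C0 ^ 2 = a2 ^ 2 + P0 ^ 2 - C0 ^ 2 by ring,
        show 2 * P0 * a2 = 2 * a2 * P0 by ring] at hq'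
    have hsum := arccos_pair
      (by rw [le_div_iff₀ hDpos]; nlinarith [habsB.1, habsB.2])
      (by rw [div_le_one hDpos]; nlinarith [habsB.1, habsB.2])
      (by rw [le_div_iff₀ hDpos]; nlinarith [habsC.1, habsC.2])
      (by rw [div_le_one hDpos]; nlinarith [habsC.1, habsC.2]) hq'
    rw [← add_div, le_div_iff₀ hDpos, zero_mul] at hsum
    nlinarith [hsum]

private lemma self_le_sinh {x : ℝ} (hx : 0 ≤ x) : x ≤ Real.sinh x := by
  rcases eq_or_lt_of_le hx with h | h
  · simp [← h]
  · exact (Real.self_lt_sinh_iff.mpr h).le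

private lemma cosh_le_one_add_sq {x : ℝ} (h0 : 0 ≤ x) (h1 : x ≤ 1) :
    Real.cosh x ≤ 1 + x ^ 2 := by
  have hb1 := Real.exp_bound (x := x) (by rw [abs_of_nonneg h0]; exact h1) (n := 2) (by norm_num)
  have hb2 := Real.exp_bound (x := -x) (by rw [abs_neg, abs_of_nonneg h0]; exact h1) (n := 2)
    (by norm_num)
  rw [Finset.sum_range_succ, Finset.sum_range_succ, Finset.sum_range_zero] at hb1 hb2
  simp only [abs_of_nonneg h0, abs_neg] at hb1 hb2
  have e1 := abs_sub_le_iff.1 hb1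
  have e2 := abs_sub_le_iff.1 hb2
  rw [Real.cosh_eq]
  norm_num at e1 e2 ⊢
  nlinarith [e1.1, e2.1, sq_nonneg x]

private lemma cosh_sub_cosh_ge {x y : ℝ} (hy : 0 ≤ y) (hxy : y ≤ x) :
    (x ^ 2 - y ^ 2) / 2 ≤ Real.cosh x - Real.cosh y := by
  have key : Real.cosh x - Real.cosh y =
      2 * Real.sinh ((x + y) / 2) * Real.sinh ((x - y) / 2) := by
    have h1 := Real.cosh_add ((x + y) / 2) ((x - y) / 2)
    have h2 := Real.cosh_sub ((x + y) / 2) ((x - y) / 2)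
    have e1 : (x + y) / 2 + (x - y) / 2 = x := by ring
    have e2 : (x + y) / 2 - (x - y) / 2 = y := by ring
    rw [e1] at h1; rw [e2] at h2; linarith
  rw [key]
  have s1 : (x + y) / 2 ≤ Real.sinh ((x + y) / 2) := self_le_sinh (by linarith)
  have s2 : (x - y) / 2 ≤ Real.sinh ((x - y) / 2) := self_le_sinh (by linarith)
  nlinarith [s1, s2]


private lemma alg_step {Cα Cβ Cγ P2 Q2 : ℝ} (hCα : 0 < Cα)
    (h1 : 2 * Cβ ^ 2 - 1 + (2 * Cγ ^ 2 - 1) ≤ 2 * Cα * P2)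
    (h2 : Cα + P2 ≤ 2 * Cβ * Q2) :
    Cα ^ 2 + Cβ ^ 2 + Cγ ^ 2 - 1 ≤ 2 * Cα * Cβ * Q2 := by
  nlinarith [mul_le_mul_of_nonneg_left h2 hCα.le]

private lemma alg_step' {Cα Cβ Cγ P2 Q2 : ℝ} (hCα : 0 < Cα)
    (h1 : 2 * Cα * P2 ≤ 2 * Cβ ^ 2 - 1 + (2 * Cγ ^ 2 - 1))
    (h2 : 2 * Cβ * Q2 ≤ Cα + P2) :
    2 * Cα * Cβ * Q2 ≤ Cα ^ 2 + Cβ ^ 2 + Cγ ^ 2 - 1 := by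
  nlinarith [mul_le_mul_of_nonneg_left h2 hCα.le]

private lemma alg_key {U V W Y E G : ℝ} (hE : 0 ≤ E) (hG : 0 ≤ G)
    (hU1 : 1 ≤ U) (hV1 : 1 ≤ V) (hWU : W ≤ U) (hVW : V ≤ W)
    (f1 : U - W ≤ 4 * E) (f2 : W - V ≤ G) (f3 : 8 * E * G ≤ W - Y) :
    Y * (U + V) ≤ U * V + W ^ 2 := by
  have f4 : (U - W) * (W - V) ≤ 4 * E * G :=
    mul_le_mul f1 f2 (by linarith) (by positivity)
  have g1 : 0 ≤ (W - Y) * (U + V - 2) :=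
    mul_nonneg (by nlinarith [mul_nonneg hE hG]) (by linarith)
  nlinarith [g1, f4, f3, mul_nonneg hE hG]

private lemma alg_sph {P M W Q : ℝ} (hQkey : Q * (P + M) ≤ P * M + W ^ 2)
    (hPW : P ≤ W) (hWM : W ≤ M) (hP : 0 < P) : Q ≤ W := by
  have g : 0 ≤ (W - P) * (M - W) := mul_nonneg (by linarith) (by linarith)
  nlinarith [g, hQkey, hP]

private lemma one_sub_sq_bound {τ E : ℝ} (hτ0 : 0 ≤ τ) (hτ1 : τ ≤ 1) (hE : 1 - τ = E) :
    E ≤ 1 - τ ^ 2 := by nlinarith [mul_nonneg hτ0 (sub_nonneg.mpr hτ1)]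

/-- Pure computation: hyperbolic final estimate. -/
private lemma hyp_final {s a b c q t : ℝ} (hs : 0 < s) (ha : 0 ≤ a) (hb : 0 ≤ b) (hc : 0 ≤ c)
    (hq0 : 0 ≤ q) (ht0 : 0 ≤ t)
    (hsa : s * a ≤ 1) (hsb : s * b ≤ 1) (hsc : s * c ≤ 1)
    (hta : a ≤ 2 * t) (htb : b ≤ 2 * t)
    (htc1 : c ≤ a + b) (htc2 : a ≤ b + c) (htc3 : b ≤ a + c)
    (hτ : 0 ≤ 1 - 16 * s ^ 2 * t ^ 2)
    {p : ℝ}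
    (h1 : Real.cosh (s * b) + Real.cosh (s * c) ≤
      2 * Real.cosh (s * (a / 2)) * Real.cosh (s * p))
    (h2 : Real.cosh (s * (a / 2)) + Real.cosh (s * p) ≤
      2 * Real.cosh (s * (b / 2)) * Real.cosh (s * q)) :
    1 / 2 * c * (1 - 16 * s ^ 2 * t ^ 2) ≤ q := by
  set α : ℝ := s * (a / 2) with hα
  set β : ℝ := s * (b / 2) with hβ
  set γ : ℝ := s * (c / 2) with hγ
  set τ : ℝ := 1 - 16 * s ^ 2 * t ^ 2 with hτdef
  clear_value α β γ τ
  have hτ1 : τ ≤ 1 := by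
    have : 0 ≤ 16 * s ^ 2 * t ^ 2 := by positivity
    rw [hτdef]; linarith
  have hα0 : 0 ≤ α := by rw [hα]; positivity
  have hβ0 : 0 ≤ β := by rw [hβ]; positivity
  have hγ0 : 0 ≤ γ := by rw [hγ]; positivity
  have hαβ1 : α + β ≤ 1 := by rw [hα, hβ]; linarith only [hsa, hsb]
  have hγ1 : γ ≤ 1 := by rw [hγ]; linarith only [hsc]
  have hαβt : α + β ≤ 2 * s * t := by
    rw [hα, hβ]
    have h' : (a + b) / 2 ≤ 2 * t := by linarith only [hta, htb]
    have h2' := mul_le_mul_of_nonneg_left h' hs.le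
    have e1 : s * ((a + b) / 2) = s * (a / 2) + s * (b / 2) := by ring
    have e2 : s * (2 * t) = 2 * s * t := by ring
    linarith only [h2', e1, e2]
  have hcb : Real.cosh (s * b) = 2 * Real.cosh β ^ 2 - 1 := by
    rw [show s * b = 2 * β by rw [hβ]; ring]; exact cosh_double _
  have hcc : Real.cosh (s * c) = 2 * Real.cosh γ ^ 2 - 1 := by
    rw [show s * c = 2 * γ by rw [hγ]; ring]; exact cosh_double _
  rw [hcb, hcc] at h1
  have hCα := Real.cosh_pos (x := α)
  have step := alg_step hCα h1 h2
  set U : ℝ := Real.cosh (α + β) with hU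
  set V : ℝ := Real.cosh (α - β) with hV
  set W : ℝ := Real.cosh γ with hW
  set Q : ℝ := Real.cosh (s * q) with hQdef
  clear_value U V W Q
  have eα : Real.sinh α ^ 2 = Real.cosh α ^ 2 - 1 := Real.sinh_sq α
  have eβ : Real.sinh β ^ 2 = Real.cosh β ^ 2 - 1 := Real.sinh_sq β
  have hUV : U * V = Real.cosh α ^ 2 + Real.cosh β ^ 2 - 1 := by
    rw [hU, hV, Real.cosh_add, Real.cosh_sub]
    linear_combination (-(Real.sinh β ^ 2)) * eα + (1 - Real.cosh α ^ 2) * eβ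
  have hUpV : U + V = 2 * Real.cosh α * Real.cosh β := by
    rw [hU, hV, Real.cosh_add, Real.cosh_sub]; ring
  have hQkey : U * V + W ^ 2 ≤ Q * (U + V) := by
    calc U * V + W ^ 2 = Real.cosh α ^ 2 + Real.cosh β ^ 2 + W ^ 2 - 1 := by
          rw [hUV]; ring
      _ ≤ 2 * Real.cosh α * Real.cosh β * Q := step
      _ = Q * (U + V) := by rw [hUpV]; ring
  have hU1 : 1 ≤ U := by rw [hU]; exact Real.one_le_cosh _
  have hV1 : 1 ≤ V := by rw [hV]; exact Real.one_le_cosh _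
  have hW1 : 1 ≤ W := by rw [hW]; exact Real.one_le_cosh _
  have hWU : W ≤ U := by
    rw [hU, hW, Real.cosh_le_cosh, abs_of_nonneg hγ0, abs_of_nonneg (by linarith only [hα0, hβ0])]
    rw [hγ, hα, hβ]
    have h' : c / 2 ≤ a / 2 + b / 2 := by linarith only [htc1]
    have h2' := mul_le_mul_of_nonneg_left h' hs.le
    have e1 : s * (a / 2 + b / 2) = s * (a / 2) + s * (b / 2) := by ring
    linarith only [h2', e1]
  have hVW : V ≤ W := by
    rw [hV, hW, Real.cosh_le_cosh, abs_of_nonneg hγ0, abs_le]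
    constructor
    · rw [hγ, hα, hβ]
      have h' : -(c / 2) ≤ a / 2 - b / 2 := by linarith only [htc3]
      have h2' := mul_le_mul_of_nonneg_left h' hs.le
      have e1 : s * (a / 2 - b / 2) = s * (a / 2) - s * (b / 2) := by ring
      have e2 : s * -(c / 2) = -(s * (c / 2)) := by ring
      linarith only [h2', e1, e2]
    · rw [hγ, hα, hβ]
      have h' : a / 2 - b / 2 ≤ c / 2 := by linarith only [htc2]
      have h2' := mul_le_mul_of_nonneg_left h' hs.le
      have e1 : s * (a / 2 - b / 2) = s * (a / 2) - s * (b / 2) := by ring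
      linarith only [h2', e1]
  have hUb : U ≤ 1 + (α + β) ^ 2 := by
    rw [hU]; exact cosh_le_one_add_sq (by linarith only [hα0, hβ0]) hαβ1
  have hWb : W ≤ 1 + γ ^ 2 := by rw [hW]; exact cosh_le_one_add_sq hγ0 hγ1
  set Y : ℝ := Real.cosh (γ * τ) with hY
  clear_value Y
  have hτ0 : 0 ≤ τ := hτ
  have hγτ0 : 0 ≤ γ * τ := mul_nonneg hγ0 hτ0
  have hγτγ : γ * τ ≤ γ := mul_le_of_le_one_right hγ0 hτ1
  have hWY : (γ ^ 2 - (γ * τ) ^ 2) / 2 ≤ W - Y := by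
    rw [hW, hY]; exact cosh_sub_cosh_ge hγτ0 hγτγ
  have hE0 : (0:ℝ) ≤ s ^ 2 * t ^ 2 := by positivity
  have hG0 : (0:ℝ) ≤ γ ^ 2 := sq_nonneg γ
  have f1 : U - W ≤ 4 * (s ^ 2 * t ^ 2) := by
    have hsq : (α + β) ^ 2 ≤ (2 * s * t) ^ 2 :=
      pow_le_pow_left₀ (by linarith only [hα0, hβ0]) hαβt 2
    have e : (2 * s * t) ^ 2 = 4 * (s ^ 2 * t ^ 2) := by ring
    linarith only [hUb, hW1, hsq, e]
  have f2 : W - V ≤ γ ^ 2 := by linarith only [hWb, hV1]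
  have f3 : 8 * (s ^ 2 * t ^ 2) * γ ^ 2 ≤ W - Y := by
    have h1τ : 16 * s ^ 2 * t ^ 2 ≤ 1 - τ ^ 2 :=
      one_sub_sq_bound hτ0 hτ1 (by rw [hτdef]; ring)
    have h2τ : γ ^ 2 * (16 * s ^ 2 * t ^ 2) ≤ γ ^ 2 * (1 - τ ^ 2) :=
      mul_le_mul_of_nonneg_left h1τ hG0
    have e : γ ^ 2 - (γ * τ) ^ 2 = γ ^ 2 * (1 - τ ^ 2) := by ring
    have e2 : γ ^ 2 * (16 * s ^ 2 * t ^ 2) = 16 * (s ^ 2 * t ^ 2) * γ ^ 2 := by ring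
    linarith only [hWY, h2τ, e, e2]
  have key := alg_key hE0 hG0 hU1 hV1 hWU hVW f1 f2 f3
  have hYQ : Y ≤ Q := by
    have h := key.trans hQkey
    exact le_of_mul_le_mul_right h (by linarith only [hU1, hV1])
  by_contra hcon
  push_neg at hcon
  have hlt : s * q < γ * τ := by
    have h' : s * q < s * (1 / 2 * c * τ) := mul_lt_mul_of_pos_left hcon hs
    have e : s * (1 / 2 * c * τ) = γ * τ := by rw [hγ]; ring
    linarith only [h', e]
  have hQY : Q < Y := by
    rw [hQdef, hY, Real.cosh_lt_cosh, abs_of_nonneg (by positivity), abs_of_nonneg hγτ0]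
    exact hlt
  linarith only [hYQ, hQY]

/-- Pure computation: spherical final estimate. -/
private lemma sph_final {s a b c q : ℝ} (hs : 0 < s) (ha : 0 ≤ a) (hb : 0 ≤ b) (hc : 0 ≤ c)
    (hq0 : 0 ≤ q)
    (hsa : s * a ≤ 1) (hsb : s * b ≤ 1) (hsc : s * c ≤ 1)
    (htc1 : c ≤ a + b) (htc2 : a ≤ b + c) (htc3 : b ≤ a + c)
    {p : ℝ}
    (h1 : 2 * Real.cos (s * (a / 2)) * Real.cos (s * p) ≤
      Real.cos (s * b) + Real.cos (s * c))
    (h2 : 2 * Real.cos (s * (b / 2)) * Real.cos (s * q) ≤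
      Real.cos (s * (a / 2)) + Real.cos (s * p)) :
    c / 2 ≤ q := by
  have hpi := Real.pi_gt_three
  set α : ℝ := s * (a / 2) with hα
  set β : ℝ := s * (b / 2) with hβ
  set γ : ℝ := s * (c / 2) with hγ
  clear_value α β γ
  have hα0 : 0 ≤ α := by rw [hα]; positivity
  have hβ0 : 0 ≤ β := by rw [hβ]; positivity
  have hγ0 : 0 ≤ γ := by rw [hγ]; positivity
  have hα1 : α ≤ 1 / 2 := by rw [hα]; linarith only [hsa]
  have hβ1 : β ≤ 1 / 2 := by rw [hβ]; linarith only [hsb]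
  have hγ1 : γ ≤ 1 / 2 := by rw [hγ]; linarith only [hsc]
  have hcb : Real.cos (s * b) = 2 * Real.cos β ^ 2 - 1 := by
    rw [show s * b = 2 * β by rw [hβ]; ring]; exact Real.cos_two_mul _
  have hcc : Real.cos (s * c) = 2 * Real.cos γ ^ 2 - 1 := by
    rw [show s * c = 2 * γ by rw [hγ]; ring]; exact Real.cos_two_mul _
  rw [hcb, hcc] at h1
  have hCα : 0 < Real.cos α :=
    Real.cos_pos_of_mem_Ioo ⟨by linarith, by linarith⟩
  have hCβ : 0 < Real.cos β :=
    Real.cos_pos_of_mem_Ioo ⟨by linarith, by linarith⟩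
  have step := alg_step' hCα h1 h2
  set P : ℝ := Real.cos (α + β) with hP
  set M : ℝ := Real.cos (α - β) with hM
  set W : ℝ := Real.cos γ with hW
  set Q : ℝ := Real.cos (s * q) with hQdef
  clear_value P M W Q
  have eα : Real.sin α ^ 2 = 1 - Real.cos α ^ 2 := Real.sin_sq α
  have eβ : Real.sin β ^ 2 = 1 - Real.cos β ^ 2 := Real.sin_sq β
  have hPM : P * M = Real.cos α ^ 2 + Real.cos β ^ 2 - 1 := by
    rw [hP, hM, Real.cos_add, Real.cos_sub]
    linear_combination (-(Real.sin β ^ 2)) * eα + (Real.cos α ^ 2 - 1) * eβ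
  have hPpM : P + M = 2 * Real.cos α * Real.cos β := by
    rw [hP, hM, Real.cos_add, Real.cos_sub]; ring
  have hQkey : Q * (P + M) ≤ P * M + W ^ 2 := by
    calc Q * (P + M) = 2 * Real.cos α * Real.cos β * Q := by
          rw [hPpM]; ring
      _ ≤ Real.cos α ^ 2 + Real.cos β ^ 2 + W ^ 2 - 1 := step
      _ = P * M + W ^ 2 := by rw [hPM]; ring
  have hPW : P ≤ W := by
    rw [hP, hW]
    apply Real.cos_le_cos_of_nonneg_of_le_pi hγ0 (by linarith)
    rw [hγ, hα, hβ]
    have h' : c / 2 ≤ a / 2 + b / 2 := by linarith only [htc1]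
    have h2' := mul_le_mul_of_nonneg_left h' hs.le
    have e1 : s * (a / 2 + b / 2) = s * (a / 2) + s * (b / 2) := by ring
    linarith only [h2', e1]
  have hWM : W ≤ M := by
    rw [hM, hW, ← Real.cos_abs (α - β)]
    apply Real.cos_le_cos_of_nonneg_of_le_pi (abs_nonneg _) (by linarith)
    rw [abs_le]
    constructor
    · rw [hγ, hα, hβ]
      have h' : -(c / 2) ≤ a / 2 - b / 2 := by linarith only [htc3]
      have h2' := mul_le_mul_of_nonneg_left h' hs.le
      have e1 : s * (a / 2 - b / 2) = s * (a / 2) - s * (b / 2) := by ring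
      have e2 : s * -(c / 2) = -(s * (c / 2)) := by ring
      linarith only [h2', e1, e2]
    · rw [hγ, hα, hβ]
      have h' : a / 2 - b / 2 ≤ c / 2 := by linarith only [htc2]
      have h2' := mul_le_mul_of_nonneg_left h' hs.le
      have e1 : s * (a / 2 - b / 2) = s * (a / 2) - s * (b / 2) := by ring
      linarith only [h2', e1]
  have hPpos : 0 < P := by
    rw [hP]
    exact Real.cos_pos_of_mem_Ioo ⟨by linarith, by linarith⟩
  have hQW : Q ≤ W := alg_sph hQkey hPW hWM hPpos
  by_contra hcon
  push_neg at hcon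
  have hlt : s * q < γ := by
    have h' : s * q < s * (c / 2) := mul_lt_mul_of_pos_left hcon hs
    rw [hγ]; exact h'
  have : W < Q := by
    rw [hQdef, hW]
    exact Real.cos_lt_cos_of_nonneg_of_le_pi (by positivity) (by linarith) hlt
  linarith only [hQW, this]

/-- Pure computation: Euclidean final estimate. -/
private lemma euc_final {a b c q : ℝ} (hc : 0 ≤ c) (hq0 : 0 ≤ q)
    {p : ℝ}
    (h1 : b ^ 2 + c ^ 2 ≤ a ^ 2 / 2 + 2 * p ^ 2)
    (h2 : (a / 2) ^ 2 + p ^ 2 ≤ b ^ 2 / 2 + 2 * q ^ 2) :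
    c / 2 ≤ q := by
  have hq2 : c ^ 2 ≤ (2 * q) ^ 2 := by nlinarith [h1, h2]
  nlinarith [hq2, hc, hq0]


end AuxLemmas

/-- The midpoint comparison estimate in spaces of curvature `≥ κ`. -/
theorem midpoint_estimate (κ : ℝ) :
    ∃ A : ℝ, 0 ≤ A ∧ ∃ r : ℝ, 0 < r ∧
      ∀ (X : Type) [MetricSpace X], CompleteSpace X → GeodesicSpace X → CurvGE κ X →
        ∀ x₁ x₂ x₃ m₂ m₃ : X,
          dist x₁ x₂ ≤ r → dist x₁ x₃ ≤ r → dist x₂ x₃ ≤ r →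
          ∀ t : ℝ, 0 < t → dist x₁ x₂ ≤ 2 * t → dist x₁ x₃ ≤ 2 * t →
          IsMidpointOf m₂ x₁ x₃ → IsMidpointOf m₃ x₁ x₂ →
          dist m₂ m₃ ≥ (1 / 2) * dist x₂ x₃ * (1 - A * t ^ 2) := by
  rcases lt_trichotomy κ 0 with hκ | hκ | hκ
  · -- hyperbolic case
    set s : ℝ := Real.sqrt (-κ) with hs_def
    have hs : 0 < s := Real.sqrt_pos.mpr (by linarith)
    refine ⟨16 * s ^ 2, by positivity, 1 / (2 * s), by positivity, ?_⟩
    intro X _ _ _ hcurv x₁ x₂ x₃ m₂ m₃ h12 h13 h23 t ht ht12 ht13 hm₂ hm₃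
    rw [ge_iff_le]
    have hrs : s * (1 / (2 * s)) = 1 / 2 := by field_simp
    by_cases hτ : 1 - 16 * s ^ 2 * t ^ 2 ≤ 0
    · have hnn := mul_nonneg (mul_nonneg (by norm_num : (0:ℝ) ≤ 1 / 2)
        (dist_nonneg (x := x₂) (y := x₃))) (neg_nonneg.mpr hτ)
      nlinarith [dist_nonneg (x := m₂) (y := m₃)]
    · push_neg at hτ
      have h1 := hyp_step hκ hcurv x₁ x₂ m₃ x₃ hm₃.1 hm₃.2
      have h2 := hyp_step hκ hcurv x₁ x₃ m₂ m₃ hm₂.1 hm₂.2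
      rw [hm₃.1, dist_comm x₃ m₃] at h2
      have hsa : s * dist x₁ x₂ ≤ 1 := by
        have := mul_le_mul_of_nonneg_left h12 hs.le; linarith [hrs]
      have hsb : s * dist x₁ x₃ ≤ 1 := by
        have := mul_le_mul_of_nonneg_left h13 hs.le; linarith [hrs]
      have hsc : s * dist x₂ x₃ ≤ 1 := by
        have := mul_le_mul_of_nonneg_left h23 hs.le; linarith [hrs]
      have tri1 : dist x₂ x₃ ≤ dist x₁ x₂ + dist x₁ x₃ := by
        have h := dist_triangle x₂ x₁ x₃; rw [dist_comm x₂ x₁] at h; exact h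
      have tri2 : dist x₁ x₂ ≤ dist x₁ x₃ + dist x₂ x₃ := by
        have h := dist_triangle x₁ x₃ x₂; rw [dist_comm x₃ x₂] at h; exact h
      have tri3 : dist x₁ x₃ ≤ dist x₁ x₂ + dist x₂ x₃ := dist_triangle x₁ x₂ x₃
      exact hyp_final hs dist_nonneg dist_nonneg dist_nonneg dist_nonneg ht.le
        hsa hsb hsc ht12 ht13 tri1 tri2 tri3 hτ.le h1 h2
  · -- Euclidean case
    subst hκ
    refine ⟨0, le_refl 0, 1, one_pos, ?_⟩
    intro X _ _ _ hcurv x₁ x₂ x₃ m₂ m₃ h12 h13 h23 t ht ht12 ht13 hm₂ hm₃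
    have h1 := euc_step hcurv x₁ x₂ m₃ x₃ hm₃.1 hm₃.2
    have h2 := euc_step hcurv x₁ x₃ m₂ m₃ hm₂.1 hm₂.2
    rw [hm₃.1, dist_comm x₃ m₃] at h2
    have hf := euc_final (dist_nonneg (x := x₂) (y := x₃))
      (dist_nonneg (x := m₂) (y := m₃)) h1 h2
    rw [ge_iff_le]
    nlinarith [hf]
  · -- spherical case
    set s : ℝ := Real.sqrt κ with hs_def
    have hs : 0 < s := Real.sqrt_pos.mpr hκ
    refine ⟨0, le_refl 0, 1 / (2 * s), by positivity, ?_⟩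
    intro X _ _ _ hcurv x₁ x₂ x₃ m₂ m₃ h12 h13 h23 t ht ht12 ht13 hm₂ hm₃
    have hrs : s * (1 / (2 * s)) = 1 / 2 := by field_simp
    have hsa2 : s * dist x₁ x₂ ≤ 1 / 2 := by
      have := mul_le_mul_of_nonneg_left h12 hs.le; linarith [hrs]
    have hsb2 : s * dist x₁ x₃ ≤ 1 / 2 := by
      have := mul_le_mul_of_nonneg_left h13 hs.le; linarith [hrs]
    have hsc2 : s * dist x₂ x₃ ≤ 1 / 2 := by
      have := mul_le_mul_of_nonneg_left h23 hs.le; linarith [hrs]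
    have hsa : s * dist x₁ x₂ ≤ 1 := by linarith
    have hsb : s * dist x₁ x₃ ≤ 1 := by linarith
    have hsc : s * dist x₂ x₃ ≤ 1 := by linarith
    have hp1 : s * dist m₃ x₃ ≤ 1 := by
      have htr : dist m₃ x₃ ≤ dist x₁ x₂ / 2 + dist x₁ x₃ := by
        have h := dist_triangle m₃ x₁ x₃
        rw [dist_comm m₃ x₁, hm₃.1] at h
        exact h
      have h' := mul_le_mul_of_nonneg_left htr hs.le
      have e : s * (dist x₁ x₂ / 2 + dist x₁ x₃) =
          s * dist x₁ x₂ / 2 + s * dist x₁ x₃ := by ring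
      linarith [h', e, hsa2, hsb2]
    have hq1 : s * dist m₂ m₃ ≤ 1 := by
      have htr : dist m₂ m₃ ≤ dist x₁ x₃ / 2 + dist x₁ x₂ / 2 := by
        have h := dist_triangle m₂ x₁ m₃
        rw [dist_comm m₂ x₁, hm₂.1, hm₃.1] at h
        exact h
      have h' := mul_le_mul_of_nonneg_left htr hs.le
      have e : s * (dist x₁ x₃ / 2 + dist x₁ x₂ / 2) =
          s * dist x₁ x₃ / 2 + s * dist x₁ x₂ / 2 := by ring
      linarith [h', e, hsa2, hsb2]
    have h1 := sph_step hκ hcurv x₁ x₂ m₃ x₃ hm₃.1 hm₃.2 hsa hp1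
    have h2 := sph_step hκ hcurv x₁ x₃ m₂ m₃ hm₂.1 hm₂.2 hsb hq1
    rw [hm₃.1, dist_comm x₃ m₃] at h2
    have tri1 : dist x₂ x₃ ≤ dist x₁ x₂ + dist x₁ x₃ := by
      have h := dist_triangle x₂ x₁ x₃; rw [dist_comm x₂ x₁] at h; exact h
    have tri2 : dist x₁ x₂ ≤ dist x₁ x₃ + dist x₂ x₃ := by
      have h := dist_triangle x₁ x₃ x₂; rw [dist_comm x₃ x₂] at h; exact h
    have tri3 : dist x₁ x₃ ≤ dist x₁ x₂ + dist x₂ x₃ := dist_triangle x₁ x₂ x₃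
    have hf := sph_final hs dist_nonneg dist_nonneg dist_nonneg dist_nonneg
      hsa hsb hsc tri1 tri2 tri3 h1 h2
    rw [ge_iff_le]
    nlinarith [hf]
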